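/- Let k > 0 be a real number with 0.558·ln k ≥ 1, set L = ⌊0.558·ln k⌋, and let n > 0 be real. For every a ∈ Poly(L): (i) if n/k ≤ 6.5·L and 6.5·L ≤ n, then sup_{λ ∈ [n/k, n]} g(a,λ) = sup_{λ ∈ [n/k, 6.5·L]} g(a,λ); and (ii) if n/k > 6.5·L, then sup_{λ ∈ [n/k, n]} g(a,λ) = g(a, n/k). -/

import Mathlib

open Real Finset

/-- The objective function `g(a, λ)` of the regularized weighted Chebyshev problem. -/
noncomputable def gObj {L : ℕ} (k : ℝ) (a : Fin (L + 1) → ℝ) (lam : ℝ) : ℝ :=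
  (1 / k) * ∑ l : Fin (L + 1), Real.exp (-lam) * (a l) ^ 2 * lam ^ (l : ℕ) * (Nat.factorial (l : ℕ) : ℝ) +
    (Real.exp (-lam) * ∑ l : Fin (L + 1), a l * lam ^ (l : ℕ)) ^ 2

/-- `e^{-x} x^l` is decreasing for `x ≥ l`. -/
lemma expM (l : ℕ) {x y : ℝ} (hy : 0 < y) (hly : (l : ℝ) ≤ y) (hyx : y ≤ x) :
    Real.exp (-x) * x ^ l ≤ Real.exp (-y) * y ^ l := by
  have hx : 0 < x := hy.trans_le hyx
  have h1 : Real.log (x / y) ≤ x / y - 1 := Real.log_le_sub_one_of_pos (by positivity)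
  have h2 : 0 ≤ Real.log (x / y) := Real.log_nonneg (by rw [le_div_iff₀ hy]; linarith)
  have h3 : (l : ℝ) * Real.log (x / y) ≤ y * Real.log (x / y) :=
    mul_le_mul_of_nonneg_right hly h2
  have h4 : y * Real.log (x / y) ≤ y * (x / y - 1) := mul_le_mul_of_nonneg_left h1 hy.le
  have h5 : y * (x / y - 1) = x - y := by field_simp
  have hlog : Real.log (x / y) = Real.log x - Real.log y := Real.log_div hx.ne' hy.ne'
  have key : (l : ℝ) * Real.log x - x ≤ (l : ℝ) * Real.log y - y := by
    rw [hlog] at h3; nlinarith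
  have ex : ∀ z : ℝ, 0 < z → Real.exp (-z) * z ^ l = Real.exp ((l : ℝ) * Real.log z - z) := by
    intro z hz
    rw [Real.exp_sub, Real.exp_nat_mul, Real.exp_log hz, Real.exp_neg]
    ring
  rw [ex x hx, ex y hy]
  exact Real.exp_le_exp.2 key

lemma telescope (M : ℕ) (x : ℝ) :
    ∑ l ∈ Finset.range (M + 1), (x ^ l - l * x ^ (l - 1)) / (Nat.factorial l : ℝ)
      = x ^ M / (Nat.factorial M : ℝ) := by
  induction M with
  | zero => simp
  | succ M ih =>
    rw [Finset.sum_range_succ, ih, Nat.factorial_succ]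
    have h1 : (Nat.factorial M : ℝ) ≠ 0 := Nat.cast_ne_zero.2 (Nat.factorial_ne_zero M)
    push_cast
    field_simp
    ring

lemma fact_le_aux : ∀ (m l : ℕ), Nat.factorial (l + m) ≤ Nat.factorial l * (l + m) ^ m := by
  intro m
  induction m with
  | zero => simp
  | succ m ih =>
    intro l
    have h1 : Nat.factorial (l + (m + 1)) = (l + m + 1) * Nat.factorial (l + m) := by
      rw [show l + (m + 1) = (l + m) + 1 by ring, Nat.factorial_succ]
    rw [h1]
    calc (l + m + 1) * Nat.factorial (l + m) ≤ (l + m + 1) * (Nat.factorial l * (l + m) ^ m) :=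
          Nat.mul_le_mul_left _ (ih l)
      _ ≤ (l + m + 1) * (Nat.factorial l * (l + m + 1) ^ m) := by
          exact Nat.mul_le_mul_left _ (Nat.mul_le_mul_left _ (Nat.pow_le_pow_left (by omega) m))
      _ = Nat.factorial l * (l + (m + 1)) ^ (m + 1) := by ring_nf

lemma e1627 : (2535/11 : ℝ) ≤ Real.exp (1627/279) := by
  have h : Real.exp (1627/279 : ℝ) = Real.exp 5 * Real.exp (232/279) := by
    rw [← Real.exp_add]; norm_num
  have h5 : Real.exp (5 : ℝ) = Real.exp 1 ^ 5 := by
    rw [Real.exp_one_pow]; norm_num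
  have hb : (2.7182818 : ℝ) ≤ Real.exp 1 :=
    le_of_lt (lt_of_le_of_lt (by norm_num) Real.exp_one_gt_d9)
  have hp : (2.7182818 : ℝ) ^ 5 ≤ Real.exp 1 ^ 5 := pow_le_pow_left₀ (by norm_num) hb 5
  have h232 : (511/279 : ℝ) ≤ Real.exp (232/279) := by
    have := Real.add_one_le_exp (232/279 : ℝ); linarith
  have hx : (2.7182818 : ℝ) ^ 5 * (511/279) ≤ Real.exp 5 * Real.exp (232/279) := by
    rw [h5]
    exact mul_le_mul hp h232 (by norm_num) (by positivity)
  rw [h]; refine le_trans ?_ hx; norm_num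

lemma e1790 : (42.25 : ℝ) ≤ Real.exp (1790/279) := by
  have h6 : Real.exp (6 : ℝ) ≤ Real.exp (1790/279 : ℝ) := Real.exp_le_exp.2 (by norm_num)
  have h5 : Real.exp (6 : ℝ) = Real.exp 1 ^ 6 := by
    rw [Real.exp_one_pow]; norm_num
  have hb : (2.7 : ℝ) ≤ Real.exp 1 :=
    le_of_lt (lt_of_le_of_lt (by norm_num) Real.exp_one_gt_d9)
  have hp : (2.7 : ℝ) ^ 6 ≤ Real.exp 1 ^ 6 := pow_le_pow_left₀ (by norm_num) hb 6
  refine le_trans ?_ (le_trans (h5 ▸ hp) h6); norm_num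

lemma e2580 : (8439 : ℝ) ≤ Real.exp (2580/279) := by
  have h : Real.exp (2580/279 : ℝ) = Real.exp 9 * Real.exp (69/279) := by
    rw [← Real.exp_add]; norm_num
  have h9 : Real.exp (9 : ℝ) = Real.exp 1 ^ 9 := by
    rw [Real.exp_one_pow]; norm_num
  have hb : (2.7182818 : ℝ) ≤ Real.exp 1 :=
    le_of_lt (lt_of_le_of_lt (by norm_num) Real.exp_one_gt_d9)
  have hp : (2.7182818 : ℝ) ^ 9 ≤ Real.exp 1 ^ 9 := pow_le_pow_left₀ (by norm_num) hb 9
  have h69 : (348/279 : ℝ) ≤ Real.exp (69/279) := by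
    have := Real.add_one_le_exp (69/279 : ℝ); linarith
  have hx : (2.7182818 : ℝ) ^ 9 * (348/279) ≤ Real.exp 9 * Real.exp (69/279) := by
    rw [h9]
    exact mul_le_mul hp h69 (by norm_num) (by positivity)
  rw [h]; refine le_trans ?_ hx; norm_num

lemma numeric1 :
    (52/11 : ℝ) * (Real.exp (((1 : ℝ) + 1)/0.558))^2 *
      (Real.exp (-(6.5 * 1)) * ∑ l ∈ Finset.range 2, (6.5 : ℝ)^l / (Nat.factorial l : ℝ)) *
      (Real.exp (-(6.5 * 1)) * ((6.5 : ℝ)^1 / (Nat.factorial 1 : ℝ))) ≤ 1 := by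
  have hsum : ∑ l ∈ Finset.range 2, (6.5 : ℝ)^l / (Nat.factorial l : ℝ) = 7.5 := by
    simp [Finset.sum_range_succ, Nat.factorial]
    norm_num
  rw [hsum]
  have hE : (Real.exp (((1 : ℝ) + 1)/0.558))^2 * Real.exp (-(6.5 * 1)) * Real.exp (-(6.5 * 1))
      = Real.exp (-(1627/279)) := by
    rw [sq, ← Real.exp_add, ← Real.exp_add, ← Real.exp_add]; norm_num
  have hmm : Real.exp (-(1627/279 : ℝ)) * Real.exp (1627/279) = 1 := by
    rw [← Real.exp_add]; norm_num
  have h2 := mul_le_mul_of_nonneg_right e1627 (Real.exp_pos (-(1627/279) : ℝ)).le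
  rw [mul_comm (Real.exp (1627/279 : ℝ)), hmm] at h2
  calc (52/11 : ℝ) * (Real.exp (((1 : ℝ) + 1)/0.558))^2 *
      (Real.exp (-(6.5 * 1)) * 7.5) *
      (Real.exp (-(6.5 * 1)) * ((6.5 : ℝ)^1 / (Nat.factorial 1 : ℝ)))
      = (2535/11 : ℝ) * ((Real.exp (((1 : ℝ) + 1)/0.558))^2 * Real.exp (-(6.5 * 1)) * Real.exp (-(6.5 * 1))) := by
        norm_num [Nat.factorial]; ring
    _ = (2535/11 : ℝ) * Real.exp (-(1627/279)) := by rw [hE]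
    _ ≤ 1 := by linarith [h2]

lemma numeric2 (L : ℕ) (hL2 : 2 ≤ L) :
    (52/11 : ℝ) * (Real.exp (((L : ℝ) + 1)/0.558))^2 *
      (Real.exp (-(6.5 * L)) * ∑ l ∈ Finset.range (L + 1), (6.5 * (L:ℝ))^l / (Nat.factorial l : ℝ)) *
      (Real.exp (-(6.5 * L)) * ((6.5 * (L:ℝ))^L / (Nat.factorial L : ℝ))) ≤ 1 := by
  set c : ℝ := 6.5 * L with hc
  have hL0 : (0:ℝ) < L := by exact_mod_cast Nat.lt_of_lt_of_le Nat.zero_lt_two hL2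
  have hc0 : (0:ℝ) < c := by rw [hc]; positivity
  set t : ℝ := c^L / (Nat.factorial L : ℝ) with htdef
  have ht0 : 0 ≤ t := by positivity
  -- each term of the sum is at most t
  have hterm : ∀ l ∈ Finset.range (L + 1), c^l / (Nat.factorial l : ℝ) ≤ t := by
    intro l hl
    have hlL : l ≤ L := Nat.lt_succ_iff.1 (Finset.mem_range.1 hl)
    have hfn : (Nat.factorial L : ℝ) ≤ (Nat.factorial l : ℝ) * c^(L - l) := by
      have h1 : Nat.factorial L ≤ Nat.factorial l * L ^ (L - l) := by
        have := fact_le_aux (L - l) l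
        rwa [Nat.add_sub_cancel' hlL] at this
      calc (Nat.factorial L : ℝ) ≤ (Nat.factorial l : ℝ) * (L:ℝ)^(L-l) := by exact_mod_cast h1
        _ ≤ (Nat.factorial l : ℝ) * c^(L-l) := by
            gcongr
            rw [hc]; nlinarith [hL0.le]
    rw [htdef, div_le_div_iff₀ (by positivity) (by positivity)]
    calc c^l * (Nat.factorial L : ℝ) ≤ c^l * ((Nat.factorial l : ℝ) * c^(L-l)) := by
          gcongr
      _ = (c^l * c^(L-l)) * (Nat.factorial l : ℝ) := by ring
      _ = c^L * (Nat.factorial l : ℝ) := by rw [← pow_add, Nat.add_sub_cancel' hlL]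
  have hS : ∑ l ∈ Finset.range (L + 1), c^l / (Nat.factorial l : ℝ) ≤ ((L:ℝ) + 1) * t := by
    calc ∑ l ∈ Finset.range (L + 1), c^l / (Nat.factorial l : ℝ)
        ≤ ∑ l ∈ Finset.range (L + 1), t := Finset.sum_le_sum hterm
      _ = ((L:ℝ) + 1) * t := by
          rw [Finset.sum_const, Finset.card_range]; push_cast; ring
  have hLe : ((L:ℝ) + 1) ≤ Real.exp L := Real.add_one_le_exp L
  have htb : t ≤ 6.5^L * Real.exp L := by
    rw [htdef, hc, mul_pow]
    rw [mul_div_assoc]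
    gcongr
    exact Real.pow_div_factorial_le_exp _ hL0.le L
  -- main chain
  have hstep : (52/11 : ℝ) * (Real.exp (((L : ℝ) + 1)/0.558))^2 *
      (Real.exp (-c) * ∑ l ∈ Finset.range (L + 1), c^l / (Nat.factorial l : ℝ)) *
      (Real.exp (-c) * t)
      ≤ (52/11 : ℝ) * (Real.exp (((L : ℝ) + 1)/0.558))^2 *
        (Real.exp (-c) * (Real.exp L * (6.5^L * Real.exp L))) *
        (Real.exp (-c) * (6.5^L * Real.exp L)) := by
    gcongr
    calc ∑ l ∈ Finset.range (L + 1), c^l / (Nat.factorial l : ℝ) ≤ ((L:ℝ)+1) * t := hS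
      _ ≤ Real.exp L * (6.5^L * Real.exp L) := by
          exact mul_le_mul hLe htb ht0 (Real.exp_pos _).le
  refine le_trans hstep ?_
  -- now pure exponential algebra
  have hsigma0 : (0:ℝ) ≤ 42.25 * Real.exp (1000/279 - 10) := by positivity
  have hsigma1 : 42.25 * Real.exp (1000/279 - 10) ≤ 1 := by
    have h2 : 42.25 * Real.exp (1000/279 - 10) ≤ Real.exp (1790/279) * Real.exp (1000/279 - 10) :=
      mul_le_mul_of_nonneg_right e1790 (Real.exp_pos (1000/279 - 10 : ℝ)).le
    rw [← Real.exp_add, show (1790/279 : ℝ) + (1000/279 - 10) = 0 by norm_num, Real.exp_zero] at h2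
    exact h2
  have heq : (52/11 : ℝ) * (Real.exp (((L : ℝ) + 1)/0.558))^2 *
        (Real.exp (-c) * (Real.exp L * (6.5^L * Real.exp L))) *
        (Real.exp (-c) * (6.5^L * Real.exp L))
      = (52/11 : ℝ) * Real.exp (1000/279) * (42.25 * Real.exp (1000/279 - 10))^L := by
    rw [hc]
    rw [show (42.25 * Real.exp (1000/279 - 10) : ℝ)^L
        = (6.5^L * 6.5^L) * Real.exp ((1000/279 - 10) * L) from by
      rw [mul_pow, mul_comm ((1000:ℝ)/279 - 10), Real.exp_nat_mul,
        show (42.25:ℝ) = 6.5 * 6.5 by norm_num, mul_pow]]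
    set A : ℝ := ((L : ℝ) + 1)/0.558 with hA
    calc (52/11 : ℝ) * (Real.exp A)^2 *
        (Real.exp (-(6.5*L)) * (Real.exp L * (6.5^L * Real.exp L))) *
        (Real.exp (-(6.5*L)) * (6.5^L * Real.exp L))
        = (52/11 : ℝ) * (6.5^L * 6.5^L) *
          (Real.exp A * Real.exp A * Real.exp (-(6.5*L)) * Real.exp (-(6.5*L)) *
            Real.exp L * Real.exp L * Real.exp L) := by ring
      _ = (52/11 : ℝ) * (6.5^L * 6.5^L) *
          Real.exp (A + A + -(6.5*L) + -(6.5*L) + (L:ℝ) + (L:ℝ) + (L:ℝ)) := by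
          rw [← Real.exp_add, ← Real.exp_add, ← Real.exp_add, ← Real.exp_add, ← Real.exp_add,
            ← Real.exp_add]
      _ = (52/11 : ℝ) * (6.5^L * 6.5^L) * Real.exp (1000/279 + (1000/279 - 10) * L) := by
          rw [hA]
          norm_num
          ring_nf
      _ = 52 / 11 * Real.exp (1000 / 279) * (6.5 ^ L * 6.5 ^ L * Real.exp ((1000 / 279 - 10) * L)) := by
          rw [Real.exp_add]; ring
  rw [heq]
  calc (52/11 : ℝ) * Real.exp (1000/279) * (42.25 * Real.exp (1000/279 - 10))^L
      ≤ (52/11 : ℝ) * Real.exp (1000/279) * (42.25 * Real.exp (1000/279 - 10))^2 := by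
        exact mul_le_mul_of_nonneg_left (pow_le_pow_of_le_one hsigma0 hsigma1 hL2)
          (by positivity)
    _ = (52/11 : ℝ) * 42.25^2 * Real.exp (-(2580/279)) := by
        calc (52/11 : ℝ) * Real.exp (1000/279) * (42.25 * Real.exp (1000/279 - 10))^2
            = (52/11 : ℝ) * 42.25^2 *
              (Real.exp (1000/279) * Real.exp (1000/279 - 10) * Real.exp (1000/279 - 10)) := by
              ring
          _ = (52/11 : ℝ) * 42.25^2 *
              Real.exp (1000/279 + (1000/279 - 10) + (1000/279 - 10)) := by
              rw [← Real.exp_add, ← Real.exp_add]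
          _ = (52/11 : ℝ) * 42.25^2 * Real.exp (-(2580/279)) := by norm_num
    _ ≤ 1 := by
        have h1 : Real.exp (-(2580/279) : ℝ) * Real.exp (2580/279) = 1 := by
          rw [← Real.exp_add]; norm_num
        have h2 := mul_le_mul_of_nonneg_right e2580 (Real.exp_pos (-(2580/279) : ℝ)).le
        rw [mul_comm (Real.exp (2580/279 : ℝ)), h1] at h2
        nlinarith [h2]

lemma numeric (L : ℕ) (hL1 : 1 ≤ L) :
    (52/11 : ℝ) * (Real.exp (((L : ℝ) + 1)/0.558))^2 *
      (Real.exp (-(6.5 * L)) * ∑ l ∈ Finset.range (L + 1), (6.5 * (L:ℝ))^l / (Nat.factorial l : ℝ)) *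
      (Real.exp (-(6.5 * L)) * ((6.5 * (L:ℝ))^L / (Nat.factorial L : ℝ))) ≤ 1 := by
  rcases Nat.lt_or_ge L 2 with h | h
  · have hL1' : L = 1 := by omega
    subst hL1'
    have h := numeric1
    norm_num at h ⊢
    convert h using 2 <;> norm_num
  · exact numeric2 L h

lemma key_ineq (L : ℕ) (hL1 : 1 ≤ L) (k x : ℝ) (hk0 : 0 < k)
    (hk : k ≤ Real.exp (((L : ℝ) + 1)/0.558)) (hx : 6.5 * L ≤ x) :
    (52/11 : ℝ) * k^2 * (Real.exp (-x))^2 *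
      (∑ l ∈ Finset.range (L + 1), x^l / (Nat.factorial l : ℝ)) *
      (x^L / (Nat.factorial L : ℝ)) ≤ 1 := by
  have hL0 : (1:ℝ) ≤ (L:ℝ) := by exact_mod_cast hL1
  have hc0 : (0:ℝ) < 6.5 * L := by nlinarith
  have hx0 : (0:ℝ) < x := lt_of_lt_of_le hc0 hx
  have hEC : Real.exp (-x) * ∑ l ∈ Finset.range (L + 1), x^l / (Nat.factorial l : ℝ)
      ≤ Real.exp (-(6.5 * L)) * ∑ l ∈ Finset.range (L + 1), (6.5 * (L:ℝ))^l / (Nat.factorial l : ℝ) := by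
    rw [Finset.mul_sum, Finset.mul_sum]
    refine Finset.sum_le_sum fun l hl => ?_
    have hlL : l ≤ L := Nat.lt_succ_iff.1 (Finset.mem_range.1 hl)
    have hlc : (l : ℝ) ≤ 6.5 * L := by
      have : (l:ℝ) ≤ (L:ℝ) := by exact_mod_cast hlL
      nlinarith
    calc Real.exp (-x) * (x^l / (Nat.factorial l : ℝ))
        = (Real.exp (-x) * x^l) / (Nat.factorial l : ℝ) := by ring
      _ ≤ (Real.exp (-(6.5*L)) * (6.5*(L:ℝ))^l) / (Nat.factorial l : ℝ) :=
          (div_le_div_iff_of_pos_right (by positivity)).2 (expM l hc0 hlc hx)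
      _ = Real.exp (-(6.5*L)) * ((6.5*(L:ℝ))^l / (Nat.factorial l : ℝ)) := by ring
  have hEt : Real.exp (-x) * (x^L / (Nat.factorial L : ℝ))
      ≤ Real.exp (-(6.5 * L)) * ((6.5 * (L:ℝ))^L / (Nat.factorial L : ℝ)) := by
    calc Real.exp (-x) * (x^L / (Nat.factorial L : ℝ))
        = (Real.exp (-x) * x^L) / (Nat.factorial L : ℝ) := by ring
      _ ≤ (Real.exp (-(6.5*L)) * (6.5*(L:ℝ))^L) / (Nat.factorial L : ℝ) :=
          (div_le_div_iff_of_pos_right (by positivity)).2 (expM L hc0 (by nlinarith) hx)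
      _ = Real.exp (-(6.5*L)) * ((6.5*(L:ℝ))^L / (Nat.factorial L : ℝ)) := by ring
  have hS0 : (0:ℝ) ≤ ∑ l ∈ Finset.range (L + 1), x^l / (Nat.factorial l : ℝ) := by positivity
  have ht0 : (0:ℝ) ≤ x^L / (Nat.factorial L : ℝ) := by positivity
  calc (52/11 : ℝ) * k^2 * (Real.exp (-x))^2 *
      (∑ l ∈ Finset.range (L + 1), x^l / (Nat.factorial l : ℝ)) *
      (x^L / (Nat.factorial L : ℝ))
      = (52/11 : ℝ) * k^2 *
        ((Real.exp (-x) * ∑ l ∈ Finset.range (L + 1), x^l / (Nat.factorial l : ℝ)) *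
          (Real.exp (-x) * (x^L / (Nat.factorial L : ℝ)))) := by ring
    _ ≤ (52/11 : ℝ) * (Real.exp (((L : ℝ) + 1)/0.558))^2 *
        ((Real.exp (-(6.5 * L)) * ∑ l ∈ Finset.range (L + 1), (6.5 * (L:ℝ))^l / (Nat.factorial l : ℝ)) *
          (Real.exp (-(6.5 * L)) * ((6.5 * (L:ℝ))^L / (Nat.factorial L : ℝ)))) := by
        have h1 : (Real.exp (-x) * ∑ l ∈ Finset.range (L + 1), x^l / (Nat.factorial l : ℝ)) *
            (Real.exp (-x) * (x^L / (Nat.factorial L : ℝ)))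
            ≤ (Real.exp (-(6.5 * L)) * ∑ l ∈ Finset.range (L + 1), (6.5 * (L:ℝ))^l / (Nat.factorial l : ℝ)) *
              (Real.exp (-(6.5 * L)) * ((6.5 * (L:ℝ))^L / (Nat.factorial L : ℝ))) :=
          mul_le_mul hEC hEt (by positivity) (by positivity)
        have h2 : k^2 ≤ (Real.exp (((L : ℝ) + 1)/0.558))^2 := by
          exact pow_le_pow_left₀ hk0.le hk 2
        have h3 : (0:ℝ) ≤ (Real.exp (-x) * ∑ l ∈ Finset.range (L + 1), x^l / (Nat.factorial l : ℝ)) *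
            (Real.exp (-x) * (x^L / (Nat.factorial L : ℝ))) := by positivity
        nlinarith [mul_le_mul h2 h1 h3 (by positivity : (0:ℝ) ≤ (Real.exp (((L : ℝ) + 1)/0.558))^2)]
    _ ≤ 1 := by
        have := numeric L hL1
        nlinarith [this]

lemma gObj_hasDerivAt {L : ℕ} (k : ℝ) (a : Fin (L + 1) → ℝ) (x : ℝ) :
    HasDerivAt (gObj k a)
      ((1 / k) * ∑ l : Fin (L + 1),
          (Real.exp (-x) * (-1) * (a l) ^ 2 * x ^ (l : ℕ)
            + Real.exp (-x) * (a l) ^ 2 * ((l : ℕ) * x ^ ((l : ℕ) - 1))) * (Nat.factorial (l : ℕ) : ℝ)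
        + 2 * (Real.exp (-x) * ∑ l : Fin (L + 1), a l * x ^ (l : ℕ)) ^ 1 *
            (Real.exp (-x) * (-1) * (∑ l : Fin (L + 1), a l * x ^ (l : ℕ))
              + Real.exp (-x) * ∑ l : Fin (L + 1), a l * ((l : ℕ) * x ^ ((l : ℕ) - 1)))) x := by
  have hneg : HasDerivAt (fun t : ℝ => -t) (-1) x := (hasDerivAt_id x).neg
  have hE : HasDerivAt (fun t : ℝ => Real.exp (-t)) (Real.exp (-x) * (-1)) x := hneg.exp
  have hF : HasDerivAt
      (fun t : ℝ => ∑ l : Fin (L + 1), Real.exp (-t) * (a l) ^ 2 * t ^ (l : ℕ) * (Nat.factorial (l : ℕ) : ℝ))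
      (∑ l : Fin (L + 1),
        (Real.exp (-x) * (-1) * (a l) ^ 2 * x ^ (l : ℕ)
          + Real.exp (-x) * (a l) ^ 2 * ((l : ℕ) * x ^ ((l : ℕ) - 1))) * (Nat.factorial (l : ℕ) : ℝ)) x := by
    refine HasDerivAt.fun_sum fun l _ => ?_
    exact (((hE.mul_const ((a l) ^ 2)).mul (hasDerivAt_pow (l : ℕ) x)).mul_const _)
  have hp : HasDerivAt (fun t : ℝ => ∑ l : Fin (L + 1), a l * t ^ (l : ℕ))
      (∑ l : Fin (L + 1), a l * ((l : ℕ) * x ^ ((l : ℕ) - 1))) x := by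
    refine HasDerivAt.fun_sum fun l _ => ?_
    exact (hasDerivAt_pow (l : ℕ) x).const_mul (a l)
  have hq := hE.mul hp
  have hS := hq.pow 2
  have h := (hF.const_mul (1 / k)).add hS
  exact h.congr_deriv (by simp)

set_option maxHeartbeats 1000000 in
lemma gObj_deriv_nonpos {L : ℕ} (hL1 : 1 ≤ L) (k : ℝ) (a : Fin (L + 1) → ℝ) (hk0 : 0 < k)
    (hk : k ≤ Real.exp (((L : ℝ) + 1)/0.558)) {x : ℝ} (hx : 6.5 * L ≤ x) :
    deriv (gObj k a) x ≤ 0 := by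
  have hL0 : (1:ℝ) ≤ (L:ℝ) := by exact_mod_cast hL1
  have hx0 : (0:ℝ) < x := lt_of_lt_of_le (by nlinarith) hx
  rw [(gObj_hasDerivAt k a x).deriv]
  set E : ℝ := Real.exp (-x) with hEdef
  have hE0 : 0 < E := Real.exp_pos _
  set P : ℝ := ∑ l : Fin (L + 1), a l * x ^ (l : ℕ) with hPdef
  set P' : ℝ := ∑ l : Fin (L + 1), a l * ((l : ℕ) * x ^ ((l : ℕ) - 1)) with hP'def
  set A : ℝ := ∑ l : Fin (L + 1), (a l) ^ 2 * x ^ (l : ℕ) * (Nat.factorial (l : ℕ) : ℝ) with hAdef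
  set A' : ℝ := ∑ l : Fin (L + 1), (a l) ^ 2 * ((l : ℕ) * x ^ ((l : ℕ) - 1)) * (Nat.factorial (l : ℕ) : ℝ) with hA'def
  set C : ℝ := ∑ l : Fin (L + 1), x ^ (l : ℕ) / (Nat.factorial (l : ℕ) : ℝ) with hCdef
  set t : ℝ := x ^ L / (Nat.factorial L : ℝ) with htdef
  set w : Fin (L + 1) → ℝ := fun l => x ^ (l : ℕ) - (l : ℕ) * x ^ ((l : ℕ) - 1) with hwdef
  set D : ℝ := ∑ l : Fin (L + 1), (a l) ^ 2 * (Nat.factorial (l : ℕ) : ℝ) * w l with hDdef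
  -- basic facts about l : Fin (L+1)
  have hlx : ∀ l : Fin (L + 1), ((l : ℕ) : ℝ) ≤ x := by
    intro l
    have h1 : ((l : ℕ) : ℝ) ≤ (L : ℝ) := by exact_mod_cast Nat.lt_succ_iff.1 l.isLt
    nlinarith
  have hw0 : ∀ l : Fin (L + 1), 0 ≤ w l := by
    intro l
    rcases Nat.eq_zero_or_pos (l : ℕ) with h0 | hpos
    · simp [hwdef, h0]
    · obtain ⟨m, hm⟩ := Nat.exists_eq_add_of_lt hpos
      have hm' : (l : ℕ) = m + 1 := by omega
      have hlx' := hlx l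
      rw [hm'] at hlx'
      simp only [hwdef]
      rw [hm']
      simp only [Nat.add_sub_cancel]
      push_cast at hlx' ⊢
      have hpm : 0 ≤ x ^ m := by positivity
      have : x ^ (m + 1) = x * x ^ m := by ring
      nlinarith
  have hD0 : 0 ≤ D := by
    refine Finset.sum_nonneg fun l _ => ?_
    have := hw0 l
    positivity
  have hA0 : 0 ≤ A := by
    refine Finset.sum_nonneg fun l _ => ?_
    positivity
  have hC0 : 0 ≤ C := by
    refine Finset.sum_nonneg fun l _ => ?_
    positivity
  have ht0 : 0 ≤ t := by positivity
  have hDeq : A - A' = D := by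
    rw [hAdef, hA'def, hDdef, ← Finset.sum_sub_distrib]
    exact Finset.sum_congr rfl fun l _ => by simp only [hwdef]; ring
  have hAD : A ≤ 13/11 * D := by
    rw [hAdef, hDdef, Finset.mul_sum]
    refine Finset.sum_le_sum fun l _ => ?_
    have hwl : x ^ (l : ℕ) ≤ 13/11 * w l := by
      rcases Nat.eq_zero_or_pos (l : ℕ) with h0 | hpos
      · simp [hwdef, h0]; norm_num
      · obtain ⟨m, hm⟩ := Nat.exists_eq_add_of_lt hpos
        have hm' : (l : ℕ) = m + 1 := by omega
        have h1 : ((l : ℕ) : ℝ) ≤ (L : ℝ) := by exact_mod_cast Nat.lt_succ_iff.1 l.isLt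
        simp only [hwdef, hm', Nat.add_sub_cancel]
        have hpm : 0 ≤ x ^ m := by positivity
        have h2 : 13 * ((m : ℝ) + 1) ≤ 2 * x := by
          rw [hm'] at h1; push_cast at h1; nlinarith
        have h3 : x ^ (m + 1) = x * x ^ m := by ring
        push_cast
        nlinarith [mul_le_mul_of_nonneg_right h2 hpm]
    calc (a l) ^ 2 * x ^ (l : ℕ) * (Nat.factorial (l : ℕ) : ℝ)
        ≤ (a l) ^ 2 * (13/11 * w l) * (Nat.factorial (l : ℕ) : ℝ) := by
          have h4 : (0:ℝ) ≤ (a l)^2 * (Nat.factorial (l : ℕ) : ℝ) := by positivity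
          calc (a l) ^ 2 * x ^ (l : ℕ) * (Nat.factorial (l : ℕ) : ℝ)
              = ((a l)^2 * (Nat.factorial (l : ℕ) : ℝ)) * x ^ (l : ℕ) := by ring
            _ ≤ ((a l)^2 * (Nat.factorial (l : ℕ) : ℝ)) * (13/11 * w l) :=
                mul_le_mul_of_nonneg_left hwl h4
            _ = (a l) ^ 2 * (13/11 * w l) * (Nat.factorial (l : ℕ) : ℝ) := by ring
      _ = 13/11 * ((a l) ^ 2 * (Nat.factorial (l : ℕ) : ℝ) * w l) := by ring
  -- Cauchy-Schwarz 1 : P^2 ≤ A * C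
  have hP2 : P ^ 2 ≤ A * C := by
    have hcs := Finset.sum_mul_sq_le_sq_mul_sq Finset.univ
      (fun l : Fin (L + 1) => a l * Real.sqrt (x ^ (l : ℕ) * (Nat.factorial (l : ℕ) : ℝ)))
      (fun l : Fin (L + 1) => Real.sqrt (x ^ (l : ℕ) / (Nat.factorial (l : ℕ) : ℝ)))
    have h1 : ∀ l : Fin (L + 1),
        a l * Real.sqrt (x ^ (l : ℕ) * (Nat.factorial (l : ℕ) : ℝ)) *
          Real.sqrt (x ^ (l : ℕ) / (Nat.factorial (l : ℕ) : ℝ)) = a l * x ^ (l : ℕ) := by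
      intro l
      rw [mul_assoc, ← Real.sqrt_mul (by positivity)]
      rw [show x ^ (l : ℕ) * (Nat.factorial (l : ℕ) : ℝ) * (x ^ (l : ℕ) / (Nat.factorial (l : ℕ) : ℝ))
          = (x ^ (l : ℕ)) ^ 2 from by
        have h0 : (Nat.factorial (l : ℕ) : ℝ) ≠ 0 := Nat.cast_ne_zero.2 (Nat.factorial_ne_zero _)
        field_simp]
      rw [Real.sqrt_sq (by positivity)]
    have h2 : ∀ l : Fin (L + 1),
        (a l * Real.sqrt (x ^ (l : ℕ) * (Nat.factorial (l : ℕ) : ℝ))) ^ 2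
          = (a l) ^ 2 * x ^ (l : ℕ) * (Nat.factorial (l : ℕ) : ℝ) := by
      intro l
      rw [mul_pow, Real.sq_sqrt (by positivity)]
      ring
    have h3 : ∀ l : Fin (L + 1),
        (Real.sqrt (x ^ (l : ℕ) / (Nat.factorial (l : ℕ) : ℝ))) ^ 2
          = x ^ (l : ℕ) / (Nat.factorial (l : ℕ) : ℝ) := by
      intro l
      rw [Real.sq_sqrt (by positivity)]
    calc P ^ 2 = (∑ l : Fin (L + 1),
          a l * Real.sqrt (x ^ (l : ℕ) * (Nat.factorial (l : ℕ) : ℝ)) *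
            Real.sqrt (x ^ (l : ℕ) / (Nat.factorial (l : ℕ) : ℝ))) ^ 2 := by
          rw [hPdef]
          congr 1
          exact (Finset.sum_congr rfl fun l _ => h1 l).symm
      _ ≤ (∑ l : Fin (L + 1),
            (a l * Real.sqrt (x ^ (l : ℕ) * (Nat.factorial (l : ℕ) : ℝ))) ^ 2) *
          (∑ l : Fin (L + 1),
            (Real.sqrt (x ^ (l : ℕ) / (Nat.factorial (l : ℕ) : ℝ))) ^ 2) := hcs
      _ = A * C := by
          rw [hAdef, hCdef]
          congr 1
          · exact Finset.sum_congr rfl fun l _ => h2 l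
          · exact Finset.sum_congr rfl fun l _ => h3 l
  -- telescoping : ∑ w l / l! = t
  have hsumw : ∑ l : Fin (L + 1), w l / (Nat.factorial (l : ℕ) : ℝ) = t := by
    rw [htdef]
    rw [show (∑ l : Fin (L + 1), w l / (Nat.factorial (l : ℕ) : ℝ))
        = ∑ l ∈ Finset.range (L + 1), (x ^ l - l * x ^ (l - 1)) / (Nat.factorial l : ℝ) from
      Fin.sum_univ_eq_sum_range (fun l => (x ^ l - l * x ^ (l - 1)) / (Nat.factorial l : ℝ)) (L + 1)]
    exact telescope L x
  -- Cauchy-Schwarz 2 : (P - P')^2 ≤ D * t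
  have hQ2 : (P - P') ^ 2 ≤ D * t := by
    have hcs := Finset.sum_mul_sq_le_sq_mul_sq Finset.univ
      (fun l : Fin (L + 1) => a l * Real.sqrt ((Nat.factorial (l : ℕ) : ℝ) * w l))
      (fun l : Fin (L + 1) => Real.sqrt (w l / (Nat.factorial (l : ℕ) : ℝ)))
    have h1 : ∀ l : Fin (L + 1),
        a l * Real.sqrt ((Nat.factorial (l : ℕ) : ℝ) * w l) *
          Real.sqrt (w l / (Nat.factorial (l : ℕ) : ℝ)) = a l * w l := by
      intro l
      rw [mul_assoc, ← Real.sqrt_mul (mul_nonneg (by positivity) (hw0 l))]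
      rw [show (Nat.factorial (l : ℕ) : ℝ) * w l * (w l / (Nat.factorial (l : ℕ) : ℝ))
          = (w l) ^ 2 from by
        have h0 : (Nat.factorial (l : ℕ) : ℝ) ≠ 0 := Nat.cast_ne_zero.2 (Nat.factorial_ne_zero _)
        field_simp]
      rw [Real.sqrt_sq (hw0 l)]
    have h2 : ∀ l : Fin (L + 1),
        (a l * Real.sqrt ((Nat.factorial (l : ℕ) : ℝ) * w l)) ^ 2
          = (a l) ^ 2 * (Nat.factorial (l : ℕ) : ℝ) * w l := by
      intro l
      rw [mul_pow, Real.sq_sqrt (mul_nonneg (by positivity) (hw0 l))]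
      ring
    have h3 : ∀ l : Fin (L + 1),
        (Real.sqrt (w l / (Nat.factorial (l : ℕ) : ℝ))) ^ 2
          = w l / (Nat.factorial (l : ℕ) : ℝ) := by
      intro l
      rw [Real.sq_sqrt (div_nonneg (hw0 l) (by positivity))]
    have hPP' : P - P' = ∑ l : Fin (L + 1), a l * w l := by
      rw [hPdef, hP'def, ← Finset.sum_sub_distrib]
      exact Finset.sum_congr rfl fun l _ => by simp only [hwdef]; ring
    calc (P - P') ^ 2 = (∑ l : Fin (L + 1),
          a l * Real.sqrt ((Nat.factorial (l : ℕ) : ℝ) * w l) *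
            Real.sqrt (w l / (Nat.factorial (l : ℕ) : ℝ))) ^ 2 := by
          rw [hPP']
          congr 1
          exact (Finset.sum_congr rfl fun l _ => h1 l).symm
      _ ≤ (∑ l : Fin (L + 1),
            (a l * Real.sqrt ((Nat.factorial (l : ℕ) : ℝ) * w l)) ^ 2) *
          (∑ l : Fin (L + 1),
            (Real.sqrt (w l / (Nat.factorial (l : ℕ) : ℝ))) ^ 2) := hcs
      _ = D * t := by
          rw [hDdef, ← hsumw]
          congr 1
          · exact Finset.sum_congr rfl fun l _ => h2 l
          · exact Finset.sum_congr rfl fun l _ => h3 l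
  -- key numeric inequality
  have hkey : (52/11 : ℝ) * k^2 * E^2 * C * t ≤ 1 := by
    rw [hEdef, hCdef, htdef]
    rw [show (∑ l : Fin (L + 1), x ^ (l : ℕ) / (Nat.factorial (l : ℕ) : ℝ))
        = ∑ l ∈ Finset.range (L + 1), x ^ l / (Nat.factorial l : ℝ) from
      Fin.sum_univ_eq_sum_range (fun l => x ^ l / (Nat.factorial l : ℝ)) (L + 1)]
    exact key_ineq L hL1 k x hk0 hk hx
  -- rewrite the first sum
  have hsum1 : (∑ l : Fin (L + 1),
      (E * (-1) * (a l) ^ 2 * x ^ (l : ℕ)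
        + E * (a l) ^ 2 * ((l : ℕ) * x ^ ((l : ℕ) - 1))) * (Nat.factorial (l : ℕ) : ℝ))
      = E * (A' - A) := by
    rw [mul_sub, hAdef, hA'def, Finset.mul_sum, Finset.mul_sum, ← Finset.sum_sub_distrib]
    exact Finset.sum_congr rfl fun l _ => by ring
  rw [hsum1]
  -- final assembly
  have hform : (1 / k) * (E * (A' - A)) + 2 * (E * P) ^ 1 * (E * (-1) * P + E * P')
      = 2 * E^2 * P * (P' - P) - E * (A - A') / k := by ring
  rw [hform, hDeq]
  have hB0 : 0 ≤ E * D / k := by positivity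
  have hsq : (2 * E^2 * P * (P' - P)) ^ 2 ≤ (E * D / k) ^ 2 := by
    calc (2 * E^2 * P * (P' - P)) ^ 2 = 4 * E^4 * (P^2 * (P - P')^2) := by ring
      _ ≤ 4 * E^4 * ((A * C) * (D * t)) := by
          refine mul_le_mul_of_nonneg_left ?_ (by positivity)
          exact mul_le_mul hP2 hQ2 (sq_nonneg _) (mul_nonneg hA0 hC0)
      _ ≤ 4 * E^4 * (((13/11) * D * C) * (D * t)) := by
          refine mul_le_mul_of_nonneg_left ?_ (by positivity)
          refine mul_le_mul_of_nonneg_right ?_ (mul_nonneg hD0 ht0)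
          calc A * C ≤ (13/11 * D) * C := mul_le_mul_of_nonneg_right hAD hC0
            _ = 13/11 * D * C := by ring
      _ = ((52/11) * E^2 * C * t) * (E^2 * D^2) := by ring
      _ ≤ (1 / k^2) * (E^2 * D^2) := by
          refine mul_le_mul_of_nonneg_right ?_ (by positivity)
          rw [le_div_iff₀ (by positivity)]
          calc (52/11) * E^2 * C * t * k^2 = (52/11) * k^2 * E^2 * C * t := by ring
            _ ≤ 1 := hkey
      _ = (E * D / k) ^ 2 := by
          field_simp
  have hR : 2 * E^2 * P * (P' - P) ≤ E * D / k := by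
    calc 2 * E^2 * P * (P' - P) ≤ |2 * E^2 * P * (P' - P)| := le_abs_self _
      _ = Real.sqrt ((2 * E^2 * P * (P' - P)) ^ 2) := (Real.sqrt_sq_eq_abs _).symm
      _ ≤ Real.sqrt ((E * D / k) ^ 2) := Real.sqrt_le_sqrt hsq
      _ = |E * D / k| := Real.sqrt_sq_eq_abs _
      _ = E * D / k := abs_of_nonneg hB0
  linarith

lemma gObj_continuous {L : ℕ} (k : ℝ) (a : Fin (L + 1) → ℝ) : Continuous (gObj k a) := by
  unfold gObj
  fun_prop

theorem stmt_0 (k : ℝ) (hk : 0 < k) (hlog : 1 ≤ 0.558 * Real.log k)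
    (L : ℕ) (hL : L = ⌊0.558 * Real.log k⌋₊)
    (n : ℝ) (hn : 0 < n) (a : Fin (L + 1) → ℝ) (ha : a 0 = -1) :
    (n / k ≤ 6.5 * L → 6.5 * L ≤ n →
      sSup (gObj k a '' Set.Icc (n / k) n) = sSup (gObj k a '' Set.Icc (n / k) (6.5 * L))) ∧
    (n / k > 6.5 * L →
      sSup (gObj k a '' Set.Icc (n / k) n) = gObj k a (n / k)) := by
  have hL1 : 1 ≤ L := by
    rw [hL]
    exact Nat.le_floor (by exact_mod_cast hlog)
  have hkE : k ≤ Real.exp (((L : ℝ) + 1)/0.558) := by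
    have hfl : 0.558 * Real.log k < (L : ℝ) + 1 := by
      rw [hL]
      exact_mod_cast Nat.lt_floor_add_one (0.558 * Real.log k)
    have h2 : Real.log k ≤ ((L : ℝ) + 1)/0.558 := by
      rw [le_div_iff₀ (by norm_num)]
      nlinarith
    calc k = Real.exp (Real.log k) := (Real.exp_log hk).symm
      _ ≤ Real.exp (((L : ℝ) + 1)/0.558) := Real.exp_le_exp.2 h2
  have hk1 : 1 < k := by
    by_contra hc
    push_neg at hc
    have : Real.log k ≤ 0 := Real.log_nonpos hk.le hc
    nlinarith
  have cont : Continuous (gObj k a) := gObj_continuous k a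
  have anti : AntitoneOn (gObj k a) (Set.Ici (6.5 * (L:ℝ))) := by
    refine antitoneOn_of_deriv_nonpos (convex_Ici _) cont.continuousOn
      (fun x _ => (gObj_hasDerivAt k a x).differentiableAt.differentiableWithinAt) (fun x hx => ?_)
    rw [interior_Ici] at hx
    exact gObj_deriv_nonpos hL1 k a hk hkE (le_of_lt hx)
  constructor
  · intro h1 h2
    have hnkn : n / k ≤ n := h1.trans h2
    have hbdd1 : BddAbove (gObj k a '' Set.Icc (n/k) n) := (isCompact_Icc.image cont).bddAbove
    have hbdd2 : BddAbove (gObj k a '' Set.Icc (n/k) (6.5*L)) :=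
      (isCompact_Icc.image cont).bddAbove
    have hne2 : (gObj k a '' Set.Icc (n/k) (6.5*(L:ℝ))).Nonempty :=
      ⟨_, Set.mem_image_of_mem _ (Set.mem_Icc.2 ⟨le_refl _, h1⟩)⟩
    apply le_antisymm
    · refine csSup_le ⟨_, Set.mem_image_of_mem _ (Set.mem_Icc.2 ⟨le_refl _, hnkn⟩)⟩ ?_
      rintro y ⟨z, hz, rfl⟩
      rcases le_or_gt z (6.5*L) with hz6 | hz6
      · exact le_csSup hbdd2 (Set.mem_image_of_mem _ ⟨hz.1, hz6⟩)
      · have hmono : gObj k a z ≤ gObj k a (6.5*L) :=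
          anti (Set.mem_Ici.2 (le_refl _)) (Set.mem_Ici.2 hz6.le) hz6.le
        exact hmono.trans (le_csSup hbdd2 (Set.mem_image_of_mem _ ⟨h1, le_refl _⟩))
    · exact csSup_le_csSup hbdd1 hne2 (Set.image_mono (Set.Icc_subset_Icc_right h2))
  · intro h
    have hnk_le : n / k ≤ n := div_le_self hn.le hk1.le
    refine IsGreatest.csSup_eq ⟨Set.mem_image_of_mem _ (Set.mem_Icc.2 ⟨le_refl _, hnk_le⟩), ?_⟩
    rintro y ⟨z, hz, rfl⟩
    exact anti (Set.mem_Ici.2 h.le) (Set.mem_Ici.2 (h.le.trans hz.1)) hz.1
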